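/- Uniformity of a nonnegative periodic function with small L² gradient (analytic core of Lemma 7.2): Let L ≥ 1, k > 0 and ε > 0. Let f : ℝ → ℝ be continuously differentiable, periodic with period L, and nonnegative. Suppose ∫₀^L f'(z)² dz ≤ ε² and ∫₀^L |f(z)² − k²| dz ≤ k·ε. Then |f(z) − k| ≤ 2ε for all z ∈ ℝ. -/

import Mathlib

/-- Uniformity of a nonnegative periodic function with small L² gradient
(analytic core of Lemma 7.2): if `f` is C¹, `L`-periodic (`L ≥ 1`), nonnegative,
with `∫₀^L f'² ≤ ε²` and `∫₀^L |f² − k²| ≤ kε`, then `|f − k| ≤ 2ε` everywhere. -/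
theorem small_gradient_uniformity
    (L k ε : ℝ) (hL : 1 ≤ L) (hk : 0 < k) (hε : 0 < ε)
    (f : ℝ → ℝ) (hf : ContDiff ℝ 1 f)
    (hper : ∀ z, f (z + L) = f z)
    (hnonneg : ∀ z, 0 ≤ f z)
    (hgrad : ∫ z in (0:ℝ)..L, (deriv f z)^2 ≤ ε^2)
    (hint : ∫ z in (0:ℝ)..L, |(f z)^2 - k^2| ≤ k * ε) :
    ∀ z, |f z - k| ≤ 2 * ε := by
  intro a
  by_contra hcon
  push_neg at hcon
  have hfc : Continuous f := hf.continuous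
  have hf'c : Continuous (deriv f) := hf.continuous_deriv le_rfl
  have hperF : Function.Periodic f L := hper
  have hperD : Function.Periodic (deriv f) L := by
    intro x
    have h2 : HasDerivAt (fun y => f (y + L)) (deriv f (x + L)) x := by
      simpa [Function.comp_def] using (((hf.differentiable one_ne_zero) (x + L)).hasDerivAt.comp x
        ((hasDerivAt_id x).add_const L))
    have he : (fun y => f (y + L)) = f := funext hper
    rw [he] at h2
    exact h2.deriv.symm
  -- shift the integrals to start at a
  have hpD2 : Function.Periodic (fun z => (deriv f z)^2) L := fun x => by show deriv f (x+L)^2 = _; rw [hperD x]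
  have hpF2 : Function.Periodic (fun z => |(f z)^2 - k^2|) L := fun x => by show |f (x+L)^2 - _| = _; rw [hperF x]
  have hgrad' : ∫ z in a..a + L, (deriv f z)^2 ≤ ε^2 := by
    rw [hpD2.intervalIntegral_add_eq a 0]; simpa using hgrad
  have hint' : ∫ z in a..a + L, |(f z)^2 - k^2| ≤ k * ε := by
    rw [hpF2.intervalIntegral_add_eq a 0]; simpa using hint
  -- key estimate: |f z - f a| ≤ ε for z ∈ [a, a+1]
  have key : ∀ z ∈ Set.Icc a (a + 1), |f z - f a| ≤ ε := by
    rintro z ⟨hz1, hz2⟩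
    have hftc : ∫ x in a..z, deriv f x = f z - f a :=
      intervalIntegral.integral_deriv_eq_sub
        (fun x _ => (hf.differentiable one_ne_zero) x) (hf'c.intervalIntegrable a z)
    have h1 : |f z - f a| ≤ ∫ x in a..z, |deriv f x| := by
      rw [← hftc]
      exact intervalIntegral.abs_integral_le_integral_abs hz1
    have h2 : ∫ x in a..z, |deriv f x|
        ≤ ∫ x in a..z, ((deriv f x)^2 / (2*ε) + ε/2) := by
      apply intervalIntegral.integral_mono_on hz1
        (hf'c.abs.intervalIntegrable a z)
        ((((hf'c.pow 2).div_const _).add continuous_const).intervalIntegrable a z)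
      intro x _
      have h := sq_nonneg (|deriv f x| - ε)
      have : (deriv f x)^2 = |deriv f x|^2 := (sq_abs _).symm
      show |deriv f x| ≤ (deriv f x)^2 / (2*ε) + ε/2
      rw [div_add' _ _ _ (by positivity), le_div_iff₀ (by positivity)]
      nlinarith [abs_nonneg (deriv f x)]
    have h3 : ∫ x in a..z, ((deriv f x)^2 / (2*ε) + ε/2)
        = (∫ x in a..z, (deriv f x)^2) / (2*ε) + (z - a) * (ε/2) := by
      rw [intervalIntegral.integral_add (f := fun x => (deriv f x)^2 / (2*ε)) (g := fun _ => ε/2) (((hf'c.pow 2).div_const _).intervalIntegrable a z)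
        (intervalIntegrable_const), intervalIntegral.integral_div,
        intervalIntegral.integral_const, smul_eq_mul]
    have h4 : ∫ x in a..z, (deriv f x)^2 ≤ ε^2 := by
      have hsplit : (∫ x in a..z, (deriv f x)^2) + ∫ x in z..a+L, (deriv f x)^2
          = ∫ x in a..a+L, (deriv f x)^2 :=
        intervalIntegral.integral_add_adjacent_intervals
          ((hf'c.pow 2).intervalIntegrable a z) ((hf'c.pow 2).intervalIntegrable z (a+L))
      have hpos : 0 ≤ ∫ x in z..a+L, (deriv f x)^2 :=
        intervalIntegral.integral_nonneg (by linarith) (fun x _ => sq_nonneg _)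
      linarith [hgrad']
    have : (∫ x in a..z, (deriv f x)^2) / (2*ε) ≤ ε^2 / (2*ε) := by
      gcongr
    have hε2 : ε^2 / (2*ε) = ε/2 := by field_simp
    nlinarith [h1, h2, h3.le, h3.ge]
  -- on [a, a+1], |f z - k| ≥ |f a - k| - ε =: c > ε
  set c : ℝ := |f a - k| - ε with hc
  have hcε : ε < c := by simp only [hc]; linarith
  have lower : ∀ z ∈ Set.Icc a (a + 1), c * k ≤ |(f z)^2 - k^2| := by
    intro z hz
    have h1 : c ≤ |f z - k| := by
      have hA := abs_sub_abs_le_abs_sub (f a - k) (f z - k)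
      have hB : f a - k - (f z - k) = -(f z - f a) := by ring
      rw [hB, abs_neg] at hA
      linarith [key z hz]
    have h2 : |(f z)^2 - k^2| = |f z - k| * (f z + k) := by
      have hE : (f z)^2 - k^2 = (f z - k) * (f z + k) := by ring
      rw [hE, abs_mul, abs_of_nonneg (show (0:ℝ) ≤ f z + k by linarith [hnonneg z])]
    rw [h2]
    have hk' : k ≤ f z + k := by linarith [hnonneg z]
    exact mul_le_mul h1 hk' hk.le (abs_nonneg _)
  -- integrate the lower bound
  have hIlow : c * k ≤ ∫ z in a..(a+1), |(f z)^2 - k^2| := by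
    have : ∫ z in a..(a+1), (c * k) ≤ ∫ z in a..(a+1), |(f z)^2 - k^2| := by
      apply intervalIntegral.integral_mono_on (by linarith) intervalIntegrable_const
        (((hfc.pow 2).sub continuous_const).abs.intervalIntegrable a (a+1)) lower
    simpa using this
  have hsplit : (∫ z in a..(a+1), |(f z)^2 - k^2|) + ∫ z in (a+1)..(a+L), |(f z)^2 - k^2|
      = ∫ z in a..a+L, |(f z)^2 - k^2| :=
    intervalIntegral.integral_add_adjacent_intervals
      (((hfc.pow 2).sub continuous_const).abs.intervalIntegrable a (a+1))
      (((hfc.pow 2).sub continuous_const).abs.intervalIntegrable (a+1) (a+L))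
  have hpos : 0 ≤ ∫ z in (a+1)..(a+L), |(f z)^2 - k^2| :=
    intervalIntegral.integral_nonneg (by linarith) (fun x _ => abs_nonneg _)
  have := mul_lt_mul_of_pos_right hcε hk
  linarith [hint', hIlow, hsplit.le, hsplit.ge, hpos, this]
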